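/- The half rotation is an involution that quantitatively displaces D: φ ∘ φ = id_M, and for all p, q ∈ D one has dist(φ(p), q) ≥ π − 2; moreover ψ(D) ⊆ D, so for all p, q ∈ D one also has dist(g(p), q) ≥ π − 2. In particular φ(D) ∩ D = ∅ and g(D) ∩ D = ∅. -/
import Mathlib


open Real MeasureTheory

noncomputable section

instance : Fact (0 < 2 * π) := ⟨by positivity⟩

/-- The cylinder `(ℝ/2πℤ) × ℝ`. -/
abbrev Cyl : Type := AddCircle (2 * π) × ℝ

/-- The quotient map `ℝ² → Cyl`. -/
def q2 (v : ℝ × ℝ) : Cyl := ((v.1 : AddCircle (2 * π)), v.2)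

/-- The lift of a point of the cylinder to the fundamental domain `[-π, π) × ℝ`. -/
def cylLift (m : Cyl) : ℝ × ℝ :=
  ((AddCircle.equivIco (2 * π) (-π) m.1 : ℝ), m.2)

/-- The Euclidean norm on `ℝ × ℝ`. -/
def eNorm (v : ℝ × ℝ) : ℝ := Real.sqrt (v.1 ^ 2 + v.2 ^ 2)

/-- Rotation of the plane about the origin by angle `a`. -/
def rot (a : ℝ) (v : ℝ × ℝ) : ℝ × ℝ :=
  (Real.cos a * v.1 - Real.sin a * v.2, Real.sin a * v.1 + Real.cos a * v.2)

/-- The planar twist map: rotate `v` about the origin by the angle `α (eNorm v)`. -/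
def twist (α : ℝ → ℝ) (v : ℝ × ℝ) : ℝ × ℝ := rot (α (eNorm v)) v

/-- The twist map descended to the cylinder. -/
def psi (α : ℝ → ℝ) (m : Cyl) : Cyl := q2 (twist α (cylLift m))

/-- The half rotation `(θ, s) ↦ (θ + π, s)` of the cylinder. -/
def phi (m : Cyl) : Cyl := (m.1 + ((π : ℝ) : AddCircle (2 * π)), m.2)

/-- The composition `g = φ ∘ ψ`. -/
def gmap (α : ℝ → ℝ) : Cyl → Cyl := phi ∘ psi α

/-- The image in the cylinder of the open Euclidean unit disk centered at the origin. -/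
def Dset : Set Cyl := q2 '' {v : ℝ × ℝ | eNorm v < 1}

/-- The distance on the cylinder induced by the Euclidean metric on `ℝ²`. -/
def cylDist (x y : Cyl) : ℝ := Real.sqrt (dist x.1 y.1 ^ 2 + dist x.2 y.2 ^ 2)

/-- The hypotheses on the twist angle profile `α`: continuous, non-increasing on `[0, ∞)`,
greater than `0.2` on `[0, 0.7]` and vanishing on `[0.9, ∞)`. -/
structure TwistAngle (α : ℝ → ℝ) : Prop where
  cont : Continuous α
  anti : AntitoneOn α (Set.Ici 0)
  big : ∀ r ∈ Set.Icc (0 : ℝ) 0.7, 0.2 < α r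
  zero : ∀ r : ℝ, 0.9 ≤ r → α r = 0

/-- φ is an involution quantitatively displacing D; ψ(D) ⊆ D, so g also
quantitatively displaces D; in particular φ(D) ∩ D = ∅ and g(D) ∩ D = ∅. -/
lemma abs_fst_le_eNorm (v : ℝ × ℝ) : |v.1| ≤ eNorm v := by
  rw [← Real.sqrt_sq_eq_abs]
  exact Real.sqrt_le_sqrt (by nlinarith [sq_nonneg v.2])

lemma eNorm_rot (a : ℝ) (v : ℝ × ℝ) : eNorm (rot a v) = eNorm v := by
  unfold eNorm rot
  congr 1
  have h := Real.sin_sq_add_cos_sq a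
  dsimp only
  nlinarith [h]

lemma cylLift_q2 {v : ℝ × ℝ} (h : eNorm v < 1) : cylLift (q2 v) = v := by
  have h1 : |v.1| ≤ eNorm v := abs_fst_le_eNorm v
  have hπ : (3 : ℝ) < π := by linarith [Real.pi_gt_three]
  have hlt : |v.1| < 1 := h1.trans_lt h
  have h2 := abs_lt.mp hlt
  have hv1 : v.1 ∈ Set.Ico (-π) (-π + 2 * π) :=
    ⟨by linarith [h2.1], by linarith [h2.2]⟩
  unfold cylLift q2
  rw [AddCircle.equivIco, QuotientAddGroup.equivIcoMod_coe]
  exact congrArg (·, v.2) ((toIcoMod_eq_self _).mpr hv1)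

lemma norm_ge (t : ℝ) (h1 : π - 2 ≤ t) (h2 : t ≤ π + 2) :
    π - 2 ≤ ‖((t : ℝ) : AddCircle (2 * π))‖ := by
  rw [AddCircle.norm_eq _]
  have hπ : (3 : ℝ) < π := by linarith [Real.pi_gt_three]
  set n : ℤ := round ((2 * π)⁻¹ * t) with hn
  rcases le_or_gt (n : ℝ) 0 with hle | hlt
  · rw [abs_of_nonneg (by nlinarith)]
    nlinarith
  · have h1' : (1 : ℝ) ≤ (n : ℝ) := by exact_mod_cast hlt
    rw [abs_of_nonpos (by nlinarith)]
    nlinarith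

lemma dist_fst_ge {x y : ℝ} (hx : |x| < 1) (hy : |y| < 1) :
    π - 2 ≤ dist (((x : ℝ) : AddCircle (2 * π)) + ((π : ℝ) : AddCircle (2 * π)))
      ((y : ℝ) : AddCircle (2 * π)) := by
  have : (((x : ℝ) : AddCircle (2 * π)) + ((π : ℝ) : AddCircle (2 * π))) -
      ((y : ℝ) : AddCircle (2 * π)) = (((x + π - y : ℝ)) : AddCircle (2 * π)) := by
    rw [AddCircle.coe_sub, AddCircle.coe_add]
  rw [dist_eq_norm, this]
  have h1 := abs_lt.mp hx
  have h2 := abs_lt.mp hy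
  exact norm_ge _ (by linarith) (by linarith)

theorem phi_involution_displaces (α : ℝ → ℝ) (hα : TwistAngle α) :
    phi ∘ phi = id ∧
    (∀ p ∈ Dset, ∀ q ∈ Dset, π - 2 ≤ cylDist (phi p) q) ∧
    psi α '' Dset ⊆ Dset ∧
    (∀ p ∈ Dset, ∀ q ∈ Dset, π - 2 ≤ cylDist (gmap α p) q) ∧
    phi '' Dset ∩ Dset = ∅ ∧
    gmap α '' Dset ∩ Dset = ∅ := by
  have hπ : (3 : ℝ) < π := by linarith [Real.pi_gt_three]
  -- involution
  have hinv : phi ∘ phi = id := by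
    funext m
    simp only [Function.comp_apply, phi, id]
    have : ((π : ℝ) : AddCircle (2 * π)) + ((π : ℝ) : AddCircle (2 * π)) = 0 := by
      rw [← AddCircle.coe_add, AddCircle.coe_eq_zero_iff]
      exact ⟨1, by rw [one_zsmul]; ring⟩
    rw [add_assoc, this, add_zero]
  -- displacement for phi
  have hdisp : ∀ p ∈ Dset, ∀ q ∈ Dset, π - 2 ≤ cylDist (phi p) q := by
    rintro _ ⟨v, hv, rfl⟩ _ ⟨w, hw, rfl⟩
    have hx : |v.1| < 1 := (abs_fst_le_eNorm v).trans_lt hv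
    have hy : |w.1| < 1 := (abs_fst_le_eNorm w).trans_lt hw
    have h1 : π - 2 ≤ dist ((phi (q2 v)).1) ((q2 w).1) := dist_fst_ge hx hy
    calc π - 2 ≤ dist ((phi (q2 v)).1) ((q2 w).1) := h1
      _ = Real.sqrt (dist ((phi (q2 v)).1) ((q2 w).1) ^ 2) := by
          rw [Real.sqrt_sq dist_nonneg]
      _ ≤ cylDist (phi (q2 v)) (q2 w) := by
          apply Real.sqrt_le_sqrt
          nlinarith [sq_nonneg (dist (phi (q2 v)).2 (q2 w).2)]
  -- psi maps D into D
  have hpsi : psi α '' Dset ⊆ Dset := by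
    rintro _ ⟨_, ⟨v, hv, rfl⟩, rfl⟩
    refine ⟨twist α (cylLift (q2 v)), ?_, rfl⟩
    rw [cylLift_q2 hv]
    simpa [twist, eNorm_rot] using hv
  -- displacement for g
  have hg : ∀ p ∈ Dset, ∀ q ∈ Dset, π - 2 ≤ cylDist (gmap α p) q := by
    intro p hp q hq
    exact hdisp (psi α p) (hpsi ⟨p, hp, rfl⟩) q hq
  refine ⟨hinv, hdisp, hpsi, hg, ?_, ?_⟩
  · ext x
    simp only [Set.mem_inter_iff, Set.mem_empty_iff_false, iff_false, not_and]
    rintro ⟨p, hp, rfl⟩ hx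
    have := hdisp p hp (phi p) hx
    have h0 : cylDist (phi p) (phi p) = 0 := by simp [cylDist]
    rw [h0] at this; linarith
  · ext x
    simp only [Set.mem_inter_iff, Set.mem_empty_iff_false, iff_false, not_and]
    rintro ⟨p, hp, rfl⟩ hx
    have := hg p hp (gmap α p) hx
    have h0 : cylDist (gmap α p) (gmap α p) = 0 := by simp [cylDist]
    rw [h0] at this; linarith
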